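/- Under hypotheses m ≤ D_t ≤ M (0<m<M) and T_t = D_t^{-1} − D^{-1} trace class, for every α ∈ ℝ with D^{-1} + α T_t > 0, the relative Rényi entropy satisfies e_t(α) := log ∫ exp(α ℓ_{ω_t|ω}) dω = (α/2) log det(I + D T_t) − (1/2) log det(I + α D T_t), where ω is the centered Gaussian measure with covariance D, ω_t that with covariance D_t, and ℓ_{ω_t|ω} = log(dω_t/dω). -/

import Mathlib

set_option maxHeartbeats 1000000

open MeasureTheory ProbabilityTheory Real Filter
open scoped NNReal ENNReal

section aux

lemma gauss_pdf_mul (c : ℝ) (x : ℝ) :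
    gaussianPDFReal 0 1 x * Real.exp (-(1/2) * (c * x ^ 2))
      = (Real.sqrt (2 * π))⁻¹ * Real.exp (-((1 + c)/2) * x ^ 2) := by
  rw [gaussianPDFReal_def]
  simp only [NNReal.coe_one, mul_one, sub_zero]
  rw [mul_assoc, ← Real.exp_add]
  ring_nf

lemma gauss_int_aux (c : ℝ) (hc : 0 < 1 + c) :
    Integrable (fun x => (Real.sqrt (2 * π))⁻¹ * Real.exp (-((1 + c)/2) * x ^ 2)) volume ∧
    ∫ x, (Real.sqrt (2 * π))⁻¹ * Real.exp (-((1 + c)/2) * x ^ 2) = (Real.sqrt (1 + c))⁻¹ := by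
  have hb : 0 < (1 + c)/2 := by linarith
  have h2π : 0 < 2 * π := by positivity
  constructor
  · exact (integrable_exp_neg_mul_sq hb).const_mul _
  · rw [integral_const_mul, integral_gaussian]
    rw [show π / ((1 + c)/2) = (2 * π) / (1 + c) by field_simp]
    rw [Real.sqrt_div h2π.le]
    have h1 : Real.sqrt (2*π) ≠ 0 := by positivity
    field_simp

-- transfer to gaussianReal
lemma gauss_withDensity : gaussianReal 0 1
    = volume.withDensity (fun x => ((Real.toNNReal (gaussianPDFReal 0 1 x) : ℝ≥0) : ℝ≥0∞)) := by
  rw [ProbabilityTheory.gaussianReal_of_var_ne_zero 0 one_ne_zero]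
  rfl

lemma gauss_integrable (c : ℝ) (hc : 0 < 1 + c) :
    Integrable (fun x => Real.exp (-(1/2) * (c * x ^ 2))) (gaussianReal 0 1) := by
  rw [gauss_withDensity,
    integrable_withDensity_iff_integrable_smul₀
      ((measurable_gaussianPDFReal 0 1).real_toNNReal.aemeasurable)]
  refine ((gauss_int_aux c hc).1).congr ?_
  filter_upwards with x
  rw [NNReal.smul_def, smul_eq_mul, Real.coe_toNNReal _ (gaussianPDFReal_nonneg 0 1 x),
    gauss_pdf_mul]

lemma gauss_integral (c : ℝ) (hc : 0 < 1 + c) :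
    ∫ x, Real.exp (-(1/2) * (c * x ^ 2)) ∂(gaussianReal 0 1) = (Real.sqrt (1 + c))⁻¹ := by
  rw [gauss_withDensity,
    integral_withDensity_eq_integral_smul₀
      ((measurable_gaussianPDFReal 0 1).real_toNNReal.aemeasurable)]
  rw [← (gauss_int_aux c hc).2]
  congr 1; ext x
  rw [NNReal.smul_def, smul_eq_mul, Real.coe_toNNReal _ (gaussianPDFReal_nonneg 0 1 x),
    gauss_pdf_mul]

lemma sq_integrable_gauss : Integrable (fun x : ℝ => x ^ 2) (gaussianReal 0 1) := by
  rw [gauss_withDensity,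
    integrable_withDensity_iff_integrable_smul₀
      ((measurable_gaussianPDFReal 0 1).real_toNNReal.aemeasurable)]
  have h := integrable_rpow_mul_exp_neg_mul_sq (b := 1/2) (s := 2) (by norm_num) (by norm_num)
  simp_rw [Real.rpow_two] at h
  refine ((h.const_mul ((Real.sqrt (2 * π))⁻¹)).congr ?_)
  filter_upwards with x
  rw [NNReal.smul_def, smul_eq_mul, Real.coe_toNNReal _ (gaussianPDFReal_nonneg 0 1 x),
    gaussianPDFReal_def]
  simp only [NNReal.coe_one, mul_one, sub_zero]
  ring_nf

lemma summable_log_one_add {c : ℕ → ℝ} (hc : Summable fun j => |c j|)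
    (hpos : ∀ j, 0 < 1 + c j) : Summable fun j => Real.log (1 + c j) := by
  refine Summable.of_norm_bounded_eventually_nat (hc.mul_left 2) ?_
  have h0 : Tendsto (fun j => |c j|) atTop (nhds 0) := hc.tendsto_atTop_zero
  filter_upwards [h0.eventually_le_const (by norm_num : (0:ℝ) < 1/2)] with j hj
  have h1 : |(-c j)| < 1 := by rw [abs_neg]; linarith
  have h2 := Real.abs_log_sub_add_sum_range_le h1 0
  simp only [Finset.range_zero, Finset.sum_empty, zero_add, abs_neg, pow_one] at h2
  have h3 : 1 - -c j = 1 + c j := by ring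
  rw [h3] at h2
  have h4 : |c j| / (1 - |c j|) ≤ 2 * |c j| := by
    rw [div_le_iff₀ (by linarith)]
    nlinarith [abs_nonneg (c j)]
  calc ‖Real.log (1 + c j)‖ = |Real.log (1 + c j)| := rfl
    _ ≤ |c j| / (1 - |c j|) := h2
    _ ≤ 2 * |c j| := h4

variable {Ω : Type*} [MeasurableSpace Ω] (P : Measure Ω) [IsProbabilityMeasure P]
  (X : ℕ → Ω → ℝ)

lemma P_integrable (j : ℕ) (hmeas : Measurable (X j)) (hgauss : P.map (X j) = gaussianReal 0 1)
    (a : ℝ) (ha : 0 < 1 + a) :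
    Integrable (fun ω => Real.exp (-(1/2) * (a * X j ω ^ 2))) P := by
  have h := gauss_integrable a ha
  rw [← hgauss] at h
  exact (integrable_map_measure h.aestronglyMeasurable hmeas.aemeasurable).mp h

lemma P_integral (j : ℕ) (hmeas : Measurable (X j)) (hgauss : P.map (X j) = gaussianReal 0 1)
    (a : ℝ) (ha : 0 < 1 + a) :
    ∫ ω, Real.exp (-(1/2) * (a * X j ω ^ 2)) ∂P = (Real.sqrt (1 + a))⁻¹ := by
  have hsm : AEStronglyMeasurable (fun x : ℝ => Real.exp (-(1/2) * (a * x ^ 2)))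
      (P.map (X j)) := Measurable.aestronglyMeasurable (by fun_prop)
  rw [← gauss_integral a ha, ← hgauss, integral_map hmeas.aemeasurable hsm]

lemma P_sq_integrable (j : ℕ) (hmeas : Measurable (X j))
    (hgauss : P.map (X j) = gaussianReal 0 1) :
    Integrable (fun ω => X j ω ^ 2) P := by
  have h := sq_integrable_gauss
  rw [← hgauss] at h
  exact (integrable_map_measure h.aestronglyMeasurable hmeas.aemeasurable).mp h

lemma P_sq_integral (j : ℕ) (hmeas : Measurable (X j))
    (hgauss : P.map (X j) = gaussianReal 0 1) :
    ∫ ω, X j ω ^ 2 ∂P = ∫ x, x ^ 2 ∂(gaussianReal 0 1) := by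
  rw [← hgauss, integral_map hmeas.aemeasurable (Measurable.aestronglyMeasurable (by fun_prop : Measurable (fun x : ℝ => x ^ 2)))]

lemma finite_prod_integral (hmeas : ∀ j, Measurable (X j))
    (hindep : iIndepFun X P)
    (hgauss : ∀ j, P.map (X j) = gaussianReal 0 1)
    (c : ℕ → ℝ) (hpos : ∀ j, 0 < 1 + c j) (s : Finset ℕ) :
    ∫ ω, Real.exp (-(1/2) * ∑ j ∈ s, c j * X j ω ^ 2) ∂P
      = ∏ j ∈ s, (Real.sqrt (1 + c j))⁻¹ := by
  have hYmeas : ∀ j, Measurable (fun ω => c j * X j ω ^ 2) := fun j =>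
    ((hmeas j).pow_const 2).const_mul _
  have hYindep : iIndepFun (fun j ω => c j * X j ω ^ 2) P :=
    hindep.comp (fun j x => c j * x ^ 2) (fun j => by fun_prop)
  have h := hYindep.mgf_sum hYmeas s (t := -(1/2))
  simp only [mgf, Finset.sum_apply] at h
  rw [h]
  exact Finset.prod_congr rfl fun j _ => P_integral P X j (hmeas j) (hgauss j) (c j) (hpos j)

lemma finite_prod_integrable (hmeas : ∀ j, Measurable (X j))
    (hindep : iIndepFun X P)
    (hgauss : ∀ j, P.map (X j) = gaussianReal 0 1)
    (c : ℕ → ℝ) (hpos : ∀ j, 0 < 1 + c j) (s : Finset ℕ) :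
    Integrable (fun ω => Real.exp (-(1/2) * ∑ j ∈ s, c j * X j ω ^ 2)) P := by
  have hYmeas : ∀ j, Measurable (fun ω => c j * X j ω ^ 2) := fun j =>
    ((hmeas j).pow_const 2).const_mul _
  have hYindep : iIndepFun (fun j ω => c j * X j ω ^ 2) P :=
    hindep.comp (fun j x => c j * x ^ 2) (fun j => by fun_prop)
  have h := hYindep.integrable_exp_mul_sum hYmeas (t := -(1/2)) (s := s)
    (fun j _ => P_integrable P X j (hmeas j) (hgauss j) (c j) (hpos j))
  simpa only [Finset.sum_apply] using h

lemma ae_summable (hmeas : ∀ j, Measurable (X j))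
    (hgauss : ∀ j, P.map (X j) = gaussianReal 0 1)
    (c : ℕ → ℝ) (hc : Summable fun j => |c j|) :
    ∀ᵐ ω ∂P, Summable fun j => |c j| * X j ω ^ 2 := by
  set K := ∫ x, x ^ 2 ∂(gaussianReal 0 1) with hK
  have hK0 : 0 ≤ K := integral_nonneg fun x => sq_nonneg x
  have hFmeas : ∀ j, Measurable fun ω => ENNReal.ofReal (|c j| * X j ω ^ 2) := fun j =>
    (((hmeas j).pow_const 2).const_mul _).ennreal_ofReal
  have hlin : ∫⁻ ω, ∑' j, ENNReal.ofReal (|c j| * X j ω ^ 2) ∂P ≠ ⊤ := by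
    rw [lintegral_tsum fun j => (hFmeas j).aemeasurable]
    have heach : ∀ j, ∫⁻ ω, ENNReal.ofReal (|c j| * X j ω ^ 2) ∂P
        = ENNReal.ofReal (|c j| * K) := by
      intro j
      rw [← MeasureTheory.ofReal_integral_eq_lintegral_ofReal
        (((P_sq_integrable P X j (hmeas j) (hgauss j))).const_mul _)
        (Filter.Eventually.of_forall fun ω => by positivity)]
      rw [integral_const_mul, P_sq_integral P X j (hmeas j) (hgauss j)]
    simp_rw [heach]
    rw [← ENNReal.ofReal_tsum_of_nonneg (fun j => by positivity) (hc.mul_right K)]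
    exact ENNReal.ofReal_ne_top
  have hae := ae_lt_top (Measurable.ennreal_tsum hFmeas) hlin
  filter_upwards [hae] with ω hω
  have hsum := ENNReal.summable_toReal hω.ne
  refine hsum.congr fun j => ?_
  rw [ENNReal.toReal_ofReal (by positivity)]

variable {Ω : Type*} [MeasurableSpace Ω] (P : Measure Ω) [IsProbabilityMeasure P]
  (X : ℕ → Ω → ℝ)

lemma sqrt_inv_exp (a : ℝ) (ha : 0 < a) :
    (Real.sqrt a)⁻¹ = Real.exp (-(1/2) * Real.log a) := by
  rw [← Real.exp_log (show (0:ℝ) < (Real.sqrt a)⁻¹ by positivity), Real.log_inv,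
    Real.log_sqrt ha.le]
  ring_nf

lemma key (hmeas : ∀ j, Measurable (X j))
    (hindep : iIndepFun X P)
    (hgauss : ∀ j, P.map (X j) = gaussianReal 0 1)
    (c : ℕ → ℝ) (hc : Summable fun j => |c j|) (hpos : ∀ j, 0 < 1 + c j) :
    ∫ ω, Real.exp (-(1/2) * ∑' j, c j * X j ω ^ 2) ∂P
      = Real.exp (-(1/2) * ∑' j, Real.log (1 + c j)) := by
  classical
  set g : ℕ → ℝ := fun j => max (-(c j)) 0 with hgdef
  have hg0 : ∀ j, 0 ≤ g j := fun j => le_max_right _ _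
  have hgle : ∀ j, g j ≤ |c j| := fun j => max_le (neg_le_abs _) (abs_nonneg _)
  have hg1 : ∀ j, 0 < 1 - g j := by
    intro j
    rcases le_or_gt (c j) 0 with h | h
    · have he : g j = -(c j) := max_eq_left (by linarith)
      rw [he]; linarith [hpos j]
    · have he : g j = 0 := max_eq_right (by linarith)
      rw [he]; norm_num
  have hgsum : Summable g := hc.of_nonneg_of_le hg0 hgle
  have hgabs : Summable fun j => |(-(g j))| := by
    refine hgsum.congr fun j => ?_
    rw [abs_neg, abs_of_nonneg (hg0 j)]
  -- log summability
  have hlogc : Summable fun j => Real.log (1 + c j) := summable_log_one_add hc hpos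
  have hlogg : Summable fun j => -Real.log (1 - g j) := by
    have h := summable_log_one_add (c := fun j => -(g j)) hgabs
      (fun j => by have := hg1 j; simpa using this)
    refine (h.neg).congr fun j => ?_
    simp [sub_eq_add_neg]
  have hlogg0 : ∀ j, 0 ≤ -Real.log (1 - g j) := by
    intro j
    have h1 : Real.log (1 - g j) ≤ 0 :=
      Real.log_nonpos (hg1 j).le (by linarith [hg0 j])
    linarith
  set B : ℝ := Real.exp (∑' j, (1/2) * -Real.log (1 - g j)) with hBdef
  -- the dominating function
  set G : Ω → ℝ := fun ω => Real.exp ((1/2) * ∑' j, g j * X j ω ^ 2) with hGdef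
  set Gn : ℕ → Ω → ℝ :=
    fun n ω => Real.exp ((1/2) * ∑ j ∈ Finset.range n, g j * X j ω ^ 2) with hGndef
  set F : ℕ → Ω → ℝ :=
    fun n ω => Real.exp (-(1/2) * ∑ j ∈ Finset.range n, c j * X j ω ^ 2) with hFdef
  have hGnmeas : ∀ n, Measurable (Gn n) := fun n => by
    apply Measurable.exp
    apply Measurable.const_mul
    exact Finset.measurable_sum _ fun j _ => ((hmeas j).pow_const 2).const_mul _
  have hFmeas : ∀ n, Measurable (F n) := fun n => by
    apply Measurable.exp
    apply Measurable.const_mul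
    exact Finset.measurable_sum _ fun j _ => ((hmeas j).pow_const 2).const_mul _
  -- pointwise facts on the a.e. summable set
  have haes := ae_summable P X hmeas hgauss c hc
  have haes' : ∀ᵐ ω ∂P, (Summable fun j => c j * X j ω ^ 2)
      ∧ (Summable fun j => g j * X j ω ^ 2)
      ∧ Tendsto (fun n => F n ω) atTop (nhds (Real.exp (-(1/2) * ∑' j, c j * X j ω ^ 2)))
      ∧ Tendsto (fun n => Gn n ω) atTop (nhds (G ω))
      ∧ (∀ n, F n ω ≤ G ω) ∧ (∀ n, Gn n ω ≤ G ω) := by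
    filter_upwards [haes] with ω hω
    have hsumc : Summable fun j => c j * X j ω ^ 2 := by
      refine Summable.of_abs (hω.congr fun j => ?_)
      rw [abs_mul, abs_pow, sq_abs]
    have hsumg : Summable fun j => g j * X j ω ^ 2 := by
      refine hω.of_nonneg_of_le (fun j => by positivity) fun j => ?_
      exact mul_le_mul_of_nonneg_right (hgle j) (sq_nonneg _)
    refine ⟨hsumc, hsumg, ?_, ?_, ?_, ?_⟩
    · exact ((Real.continuous_exp.continuousAt).comp
        ((continuous_const.mul continuous_id).continuousAt)).tendsto.comp
        hsumc.hasSum.tendsto_sum_nat |>.congr (fun n => rfl)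
    · exact ((Real.continuous_exp.continuousAt).comp
        ((continuous_const.mul continuous_id).continuousAt)).tendsto.comp
        hsumg.hasSum.tendsto_sum_nat |>.congr (fun n => rfl)
    · intro n
      apply Real.exp_le_exp.mpr
      have h1 : -(1/2) * ∑ j ∈ Finset.range n, c j * X j ω ^ 2
          ≤ (1/2) * ∑ j ∈ Finset.range n, g j * X j ω ^ 2 := by
        rw [neg_mul, neg_le, ← mul_neg, ← Finset.sum_neg_distrib]
        apply mul_le_mul_of_nonneg_left _ (by norm_num : (0:ℝ) ≤ 1/2)
        apply Finset.sum_le_sum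
        intro j _
        have hx := sq_nonneg (X j ω)
        have : -(c j) ≤ g j := le_max_left _ _
        nlinarith
      refine h1.trans ?_
      apply mul_le_mul_of_nonneg_left _ (by norm_num : (0:ℝ) ≤ 1/2)
      exact Summable.sum_le_tsum _ (fun j _ => by positivity) hsumg
    · intro n
      apply Real.exp_le_exp.mpr
      apply mul_le_mul_of_nonneg_left _ (by norm_num : (0:ℝ) ≤ 1/2)
      exact Summable.sum_le_tsum _ (fun j _ => by positivity) hsumg
  -- integral of Gn
  have hGn_val : ∀ n, ∫ ω, Gn n ω ∂P = ∏ j ∈ Finset.range n, (Real.sqrt (1 - g j))⁻¹ := by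
    intro n
    have h := finite_prod_integral P X hmeas hindep hgauss (fun j => -(g j))
      (fun j => by have := hg1 j; simpa using this) (Finset.range n)
    have he : ∀ ω, Real.exp (-(1/2) * ∑ j ∈ Finset.range n, -(g j) * X j ω ^ 2) = Gn n ω := by
      intro ω
      congr 1
      simp only [neg_mul]
      rw [Finset.sum_neg_distrib]
      ring
    simp_rw [he] at h
    rw [h]
    exact Finset.prod_congr rfl fun j _ => by rw [show (1:ℝ) + -(g j) = 1 - g j by ring]
  have hGn_int : ∀ n, Integrable (Gn n) P := by
    intro n
    have h := finite_prod_integrable P X hmeas hindep hgauss (fun j => -(g j))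
      (fun j => by have := hg1 j; simpa using this) (Finset.range n)
    have he : (fun ω => Real.exp (-(1/2) * ∑ j ∈ Finset.range n, -(g j) * X j ω ^ 2))
        = Gn n := by
      funext ω
      rw [hGndef]
      congr 1
      simp only [neg_mul]
      rw [Finset.sum_neg_distrib]
      ring
    rw [← he]
    exact h
  have hGn_le_B : ∀ n, ∫ ω, Gn n ω ∂P ≤ B := by
    intro n
    rw [hGn_val n]
    have hprod : ∏ j ∈ Finset.range n, (Real.sqrt (1 - g j))⁻¹
        = Real.exp (∑ j ∈ Finset.range n, (1/2) * -Real.log (1 - g j)) := by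
      rw [Real.exp_sum]
      refine Finset.prod_congr rfl fun j _ => ?_
      rw [sqrt_inv_exp _ (hg1 j)]
      ring_nf
    rw [hprod, hBdef]
    apply Real.exp_le_exp.mpr
    exact Summable.sum_le_tsum _ (fun j _ => mul_nonneg (by norm_num) (hlogg0 j))
      (hlogg.mul_left _)
  have hGmeas : AEStronglyMeasurable G P := by
    refine aestronglyMeasurable_of_tendsto_ae atTop
      (fun n => (hGnmeas n).aestronglyMeasurable) ?_
    filter_upwards [haes'] with ω hω
    exact hω.2.2.2.1
  have hGnonneg : 0 ≤ᵐ[P] G := Filter.Eventually.of_forall fun ω => (Real.exp_pos _).le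
  have hGfin : HasFiniteIntegral G P := by
    rw [hasFiniteIntegral_iff_ofReal hGnonneg]
    have hliminf : ∀ᵐ ω ∂P, ENNReal.ofReal (G ω)
        = Filter.liminf (fun n => ENNReal.ofReal (Gn n ω)) atTop := by
      filter_upwards [haes'] with ω hω
      have ht : Tendsto (fun n => ENNReal.ofReal (Gn n ω)) atTop
          (nhds (ENNReal.ofReal (G ω))) :=
        (ENNReal.continuous_ofReal.continuousAt).tendsto.comp hω.2.2.2.1
      exact ht.liminf_eq.symm
    calc ∫⁻ ω, ENNReal.ofReal (G ω) ∂P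
        = ∫⁻ ω, Filter.liminf (fun n => ENNReal.ofReal (Gn n ω)) atTop ∂P :=
          lintegral_congr_ae hliminf
      _ ≤ Filter.liminf (fun n => ∫⁻ ω, ENNReal.ofReal (Gn n ω) ∂P) atTop :=
          lintegral_liminf_le fun n => (hGnmeas n).ennreal_ofReal
      _ ≤ ENNReal.ofReal B := by
          refine Filter.liminf_le_of_frequently_le (Filter.Frequently.of_forall fun n => ?_)
          rw [← MeasureTheory.ofReal_integral_eq_lintegral_ofReal (hGn_int n)
            (Filter.Eventually.of_forall fun ω => (Real.exp_pos _).le)]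
          exact ENNReal.ofReal_le_ofReal (hGn_le_B n)
      _ < ⊤ := ENNReal.ofReal_lt_top
  have hGint : Integrable G P := ⟨hGmeas, hGfin⟩
  have hdct := tendsto_integral_of_dominated_convergence G
    (fun n => (hFmeas n).aestronglyMeasurable) hGint
    (fun n => by
      filter_upwards [haes'] with ω hω
      rw [Real.norm_eq_abs, abs_of_pos (Real.exp_pos _)]
      exact hω.2.2.2.2.1 n)
    (by filter_upwards [haes'] with ω hω; exact hω.2.2.1)
  have hFn_val : ∀ n, ∫ ω, F n ω ∂P
      = Real.exp (∑ j ∈ Finset.range n, -(1/2) * Real.log (1 + c j)) := by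
    intro n
    rw [show ∫ ω, F n ω ∂P = ∏ j ∈ Finset.range n, (Real.sqrt (1 + c j))⁻¹ from
      finite_prod_integral P X hmeas hindep hgauss c hpos (Finset.range n), Real.exp_sum]
    exact Finset.prod_congr rfl fun j _ => by rw [sqrt_inv_exp _ (hpos j)]
  have htend2 : Tendsto (fun n => ∫ ω, F n ω ∂P) atTop
      (nhds (Real.exp (∑' j, -(1/2) * Real.log (1 + c j)))) := by
    simp_rw [hFn_val]
    exact (Real.continuous_exp.continuousAt).tendsto.comp
      (hlogc.mul_left (-(1/2))).hasSum.tendsto_sum_nat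
  have hfinal := tendsto_nhds_unique hdct htend2
  rw [tsum_mul_left] at hfinal
  exact hfinal

end aux

open MeasureTheory ProbabilityTheory

/-- The relative Rényi entropy formula
`e_t(α) = log ∫ exp(α ℓ_{ω_t|ω}) dω = (α/2) log det(I + D T_t) − (1/2) log det(I + α D T_t)`
for `α` with `D⁻¹ + α T_t > 0`.  Everything is encoded in the eigenbasis of the
self-adjoint trace class operator `Q = D^{1/2} T_t D^{1/2}` with eigenvalue sequence
`q`: under `ω` (covariance `D`), `x = D^{1/2} y` with `y` standard Gaussian (i.i.d.
standard normal coordinates `X j`), and by the Feldman–Hajek–Shale formula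
`ℓ_{ω_t|ω} = (1/2) log det(I + D T_t) − (1/2)(x, T_t x)`
`= (1/2) ∑_j log(1 + q_j) − (1/2) ∑_j q_j y_j²`.  The condition `ω_t ≃ ω` with
`D_t > 0` reads `1 + q_j > 0`, the condition `D⁻¹ + α T_t > 0` reads
`1 + α q_j > 0`, and `log det(I + α D T_t) = ∑_j log(1 + α q_j)`. -/
theorem stmt10 {Ω : Type*} [MeasurableSpace Ω] (P : Measure Ω) [IsProbabilityMeasure P]
    (X : ℕ → Ω → ℝ) (hmeas : ∀ j, Measurable (X j))
    (hindep : iIndepFun X P)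
    (hgauss : ∀ j, P.map (X j) = gaussianReal 0 1)
    (q : ℕ → ℝ) (hq : Summable (fun j => |q j|)) (hpos : ∀ j, 0 < 1 + q j)
    (α : ℝ) (hα : ∀ j, 0 < 1 + α * q j) :
    Real.log (∫ ω, Real.exp (α *
        ((1 / 2) * (∑' j, Real.log (1 + q j)) - (1 / 2) * ∑' j, q j * (X j ω) ^ 2)) ∂P) =
      α / 2 * (∑' j, Real.log (1 + q j)) - (1 / 2) * ∑' j, Real.log (1 + α * q j) := by
  set C : ℝ := ∑' j, Real.log (1 + q j) with hC
  have hc : Summable fun j => |α * q j| := by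
    refine (hq.mul_left |α|).congr fun j => ?_
    rw [abs_mul]
  have hrw : ∀ ω : Ω, Real.exp (α * ((1 / 2) * C - (1 / 2) * ∑' j, q j * (X j ω) ^ 2))
      = Real.exp (α / 2 * C) * Real.exp (-(1/2) * ∑' j, (α * q j) * X j ω ^ 2) := by
    intro ω
    rw [← Real.exp_add]
    congr 1
    rw [show ∑' j, (α * q j) * X j ω ^ 2 = α * ∑' j, q j * X j ω ^ 2 by
      rw [← tsum_mul_left]; exact tsum_congr fun j => by ring]
    ring
  simp_rw [hrw]
  rw [MeasureTheory.integral_const_mul,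
    key P X hmeas hindep hgauss (fun j => α * q j) hc hα,
    ← Real.exp_add, Real.log_exp]
  ring
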